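/- For 0 \le j \le d-1 one has F_{j+1} E^*_{j+1} A E^*_j = \mathcal{R} F_j E^*_j; equivalently, the diagram with horizontal maps R : E^*_jV \to E^*_{j+1}V and \mathcal{R} : F_jV \to F_{j+1}V and vertical maps \sum_\ell F_\ell E^*_\ell commutes. -/

import Mathlib

/-- For `0 ≤ j ≤ d-1`, `F_{j+1} E*_{j+1} A E*_j = 𝓡 F_j E*_j`;
equivalently the diagram with horizontal maps `R : E*_jV → E*_{j+1}V`,
`𝓡 : F_jV → F_{j+1}V` and vertical maps `∑ F_ℓ E*_ℓ` commutes. -/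
theorem stmt8 {F V : Type*} [Field F] [AddCommGroup V] [Module F V]
    [FiniteDimensional F V] (d : ℕ) (hd : 1 ≤ d)
    (A As : Module.End F V) (Es Fi : ℕ → Module.End F V) (θ θs : ℕ → F)
    (cR cL R : Module.End F V)
    (hEsEs : ∀ i ≤ d, ∀ j ≤ d, Es i * Es j = if i = j then Es i else 0)
    (hFF : ∀ i ≤ d, ∀ j ≤ d, Fi i * Fi j = if i = j then Fi i else 0)
    (hEssum : ∑ i ∈ Finset.range (d + 1), Es i = 1)
    (hFsum : ∑ i ∈ Finset.range (d + 1), Fi i = 1)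
    (hFE0 : ∀ i j, i < j → j ≤ d → Fi j * Es i = 0)
    (hEF0 : ∀ i j, i < j → j ≤ d → Es j * Fi i = 0)
    (hcR : cR = A - ∑ i ∈ Finset.range (d + 1), θ i • Fi i)
    (hcL : cL = As - ∑ i ∈ Finset.range (d + 1), θs i • Fi i)
    (hFAF1 : ∀ i < d, Fi (i + 1) * A * Fi i = cR * Fi i)
    (hFAF1' : ∀ i < d, Fi (i + 1) * A * Fi i = Fi (i + 1) * cR)
    (hFAF0 : ∀ i ≤ d, Fi i * A * Fi i = θ i • Fi i)
    (hFAsF1 : ∀ i, 1 ≤ i → i ≤ d → Fi (i - 1) * As * Fi i = cL * Fi i)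
    (hFAsF1' : ∀ i, 1 ≤ i → i ≤ d → Fi (i - 1) * As * Fi i = Fi (i - 1) * cL)
    (hFAsF0 : ∀ i ≤ d, Fi i * As * Fi i = θs i • Fi i)
    (hR : R = ∑ i ∈ Finset.range d, Es (i + 1) * A * Es i) :
    ∀ j < d, Fi (j + 1) * Es (j + 1) * A * Es j = cR * (Fi j * Es j) ∧
      (∑ l ∈ Finset.range (d + 1), Fi l * Es l) * R * Es j =
        cR * (∑ l ∈ Finset.range (d + 1), Fi l * Es l) * Es j := by
  intro j hj
  have hjd : j ≤ d := le_of_lt hj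
  have hj1 : j + 1 ≤ d := hj
  -- key vanishing lemma: Fi l * A * Fi m = 0 unless l = m or l = m+1 (for m < d)
  have L2 : ∀ l m, l ≤ d → m < d → l ≠ m → l ≠ m + 1 → Fi l * A * Fi m = 0 := by
    intro l m hl hm hlm hlm1
    have h1 := hFAF1 m hm
    have hz1 : Fi l * Fi (m + 1) = 0 := by
      rw [hFF l hl (m + 1) hm, if_neg hlm1]
    have hz2 : Fi l * Fi m = 0 := by
      rw [hFF l hl m (le_of_lt hm), if_neg hlm]
    have hsum : (∑ i ∈ Finset.range (d + 1), θ i • Fi i) * Fi m = θ m • Fi m := by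
      rw [Finset.sum_mul]
      rw [Finset.sum_eq_single_of_mem m (Finset.mem_range.mpr (by omega))]
      · rw [smul_mul_assoc, hFF m (le_of_lt hm) m (le_of_lt hm), if_pos rfl]
      · intro i hi hne
        have hid : i ≤ d := Nat.lt_succ_iff.mp (Finset.mem_range.mp hi)
        rw [smul_mul_assoc, hFF i hid m (le_of_lt hm), if_neg hne, smul_zero]
    have hcRm : cR * Fi m = A * Fi m - θ m • Fi m := by
      rw [hcR, sub_mul, hsum]
    have hL : Fi l * (Fi (m + 1) * A * Fi m) = 0 := by
      rw [mul_assoc (Fi (m + 1)) A (Fi m), ← mul_assoc, hz1, zero_mul]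
    have hR' : Fi l * (cR * Fi m) = Fi l * A * Fi m := by
      rw [hcRm, mul_sub, mul_smul_comm, hz2, smul_zero, sub_zero, mul_assoc]
    rw [← hR', ← h1]; exact hL
  -- Fi (j+1) * Es (j+1) * Fi (j+1) = Fi (j+1)
  have L3 : Fi (j + 1) * Es (j + 1) * Fi (j + 1) = Fi (j + 1) := by
    have base : Fi (j + 1) * (∑ i ∈ Finset.range (d + 1), Es i) * Fi (j + 1) = Fi (j + 1) := by
      rw [hEssum, mul_one, hFF (j + 1) hj1 (j + 1) hj1, if_pos rfl]
    have expand : Fi (j + 1) * (∑ i ∈ Finset.range (d + 1), Es i) * Fi (j + 1)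
        = ∑ i ∈ Finset.range (d + 1), Fi (j + 1) * Es i * Fi (j + 1) := by
      rw [Finset.mul_sum, Finset.sum_mul]
    have single : ∑ i ∈ Finset.range (d + 1), Fi (j + 1) * Es i * Fi (j + 1)
        = Fi (j + 1) * Es (j + 1) * Fi (j + 1) := by
      apply Finset.sum_eq_single_of_mem (j + 1) (Finset.mem_range.mpr (by omega))
      intro i hi hne
      have hid : i ≤ d := Nat.lt_succ_iff.mp (Finset.mem_range.mp hi)
      rcases lt_or_gt_of_ne hne with hlt | hgt
      · rw [hFE0 i (j + 1) hlt hj1, zero_mul]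
      · rw [mul_assoc, hEF0 (j + 1) i hgt hid, mul_zero]
    rw [← single, ← expand, base]
  have key : Fi (j + 1) * Es (j + 1) * A * Es j = cR * (Fi j * Es j) := by
    have expand : Fi (j + 1) * Es (j + 1) * A * Es j
        = ∑ l ∈ Finset.range (d + 1), ∑ m ∈ Finset.range (d + 1),
            Fi (j + 1) * Es (j + 1) * Fi l * (A * (Fi m * Es j)) := by
      calc Fi (j + 1) * Es (j + 1) * A * Es j
          = Fi (j + 1) * Es (j + 1) *
              ((∑ l ∈ Finset.range (d + 1), Fi l) *
                (A * ((∑ m ∈ Finset.range (d + 1), Fi m) * Es j))) := by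
            rw [hFsum]; noncomm_ring
        _ = Fi (j + 1) * Es (j + 1) *
              (∑ l ∈ Finset.range (d + 1), Fi l *
                (A * (∑ m ∈ Finset.range (d + 1), Fi m * Es j))) := by
            rw [Finset.sum_mul, Finset.sum_mul]
        _ = ∑ l ∈ Finset.range (d + 1), Fi (j + 1) * Es (j + 1) *
              (Fi l * (A * (∑ m ∈ Finset.range (d + 1), Fi m * Es j))) := by
            rw [Finset.mul_sum]
        _ = ∑ l ∈ Finset.range (d + 1), ∑ m ∈ Finset.range (d + 1),
              Fi (j + 1) * Es (j + 1) * Fi l * (A * (Fi m * Es j)) := by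
            refine Finset.sum_congr rfl fun l _ => ?_
            rw [Finset.mul_sum, Finset.mul_sum, Finset.mul_sum]
            exact Finset.sum_congr rfl fun m _ => by noncomm_ring
    have single : (∑ l ∈ Finset.range (d + 1), ∑ m ∈ Finset.range (d + 1),
            Fi (j + 1) * Es (j + 1) * Fi l * (A * (Fi m * Es j)))
        = Fi (j + 1) * Es (j + 1) * Fi (j + 1) * (A * (Fi j * Es j)) := by
      rw [Finset.sum_eq_single_of_mem (j + 1) (Finset.mem_range.mpr (by omega))]
      · apply Finset.sum_eq_single_of_mem j (Finset.mem_range.mpr (by omega))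
        intro m hm hne
        have hmd : m ≤ d := Nat.lt_succ_iff.mp (Finset.mem_range.mp hm)
        rcases lt_or_gt_of_ne hne with hlt | hgt
        · -- m < j : Fi (j+1) * A * Fi m = 0
          have h0 : Fi (j + 1) * A * Fi m = 0 :=
            L2 (j + 1) m hj1 (by omega) (by omega) (by omega)
          calc Fi (j + 1) * Es (j + 1) * Fi (j + 1) * (A * (Fi m * Es j))
              = Fi (j + 1) * Es (j + 1) * (Fi (j + 1) * A * Fi m * Es j) := by noncomm_ring
            _ = 0 := by rw [h0, zero_mul, mul_zero]
        · rw [hFE0 j m hgt hmd, mul_zero, mul_zero]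
      · intro l hl hne
        have hld : l ≤ d := Nat.lt_succ_iff.mp (Finset.mem_range.mp hl)
        apply Finset.sum_eq_zero
        intro m hm
        have hmd : m ≤ d := Nat.lt_succ_iff.mp (Finset.mem_range.mp hm)
        rcases lt_or_gt_of_ne hne with hlt | hgt
        · -- l < j+1 : Es (j+1) * Fi l = 0
          rw [mul_assoc (Fi (j + 1)) (Es (j + 1)) (Fi l), hEF0 l (j + 1) hlt hj1,
            mul_zero, zero_mul]
        · by_cases hmj : m ≤ j
          · have h0 : Fi l * A * Fi m = 0 :=
              L2 l m hld (by omega) (by omega) (by omega)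
            calc Fi (j + 1) * Es (j + 1) * Fi l * (A * (Fi m * Es j))
                = Fi (j + 1) * Es (j + 1) * (Fi l * A * Fi m * Es j) := by noncomm_ring
              _ = 0 := by rw [h0, zero_mul, mul_zero]
          · rw [hFE0 j m (by omega) hmd, mul_zero, mul_zero]
    rw [expand, single, L3, ← mul_assoc, ← mul_assoc, hFAF1 j hj, mul_assoc]
  refine ⟨key, ?_⟩
  -- second conjunct
  have hsumE : (∑ l ∈ Finset.range (d + 1), Fi l * Es l) * Es j = Fi j * Es j := by
    rw [Finset.sum_mul]
    have h1 : ∑ l ∈ Finset.range (d + 1), Fi l * Es l * Es j = Fi j * Es j * Es j := by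
      apply Finset.sum_eq_single_of_mem j (Finset.mem_range.mpr (by omega))
      intro l hl hne
      have hld : l ≤ d := Nat.lt_succ_iff.mp (Finset.mem_range.mp hl)
      rw [mul_assoc, hEsEs l hld j hjd, if_neg hne, mul_zero]
    rw [h1, mul_assoc, hEsEs j hjd j hjd, if_pos rfl]
  have hRE : R * Es j = Es (j + 1) * A * Es j := by
    rw [hR, Finset.sum_mul]
    have h1 : ∑ i ∈ Finset.range d, Es (i + 1) * A * Es i * Es j
        = Es (j + 1) * A * Es j * Es j := by
      apply Finset.sum_eq_single_of_mem j (Finset.mem_range.mpr hj)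
      intro i hi hne
      have hid : i < d := Finset.mem_range.mp hi
      rw [mul_assoc, hEsEs i (le_of_lt hid) j hjd, if_neg hne, mul_zero]
    rw [h1, mul_assoc, hEsEs j hjd j hjd, if_pos rfl]
  have hsumE1 : (∑ l ∈ Finset.range (d + 1), Fi l * Es l) * Es (j + 1)
      = Fi (j + 1) * Es (j + 1) := by
    rw [Finset.sum_mul]
    have h1 : ∑ l ∈ Finset.range (d + 1), Fi l * Es l * Es (j + 1)
        = Fi (j + 1) * Es (j + 1) * Es (j + 1) := by
      apply Finset.sum_eq_single_of_mem (j + 1) (Finset.mem_range.mpr (by omega))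
      intro l hl hne
      have hld : l ≤ d := Nat.lt_succ_iff.mp (Finset.mem_range.mp hl)
      rw [mul_assoc, hEsEs l hld (j + 1) hj1, if_neg hne, mul_zero]
    rw [h1, mul_assoc, hEsEs (j + 1) hj1 (j + 1) hj1, if_pos rfl]
  calc (∑ l ∈ Finset.range (d + 1), Fi l * Es l) * R * Es j
      = (∑ l ∈ Finset.range (d + 1), Fi l * Es l) * (Es (j + 1) * A * Es j) := by
        rw [mul_assoc, hRE]
    _ = ((∑ l ∈ Finset.range (d + 1), Fi l * Es l) * Es (j + 1)) * A * Es j := by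
        noncomm_ring
    _ = Fi (j + 1) * Es (j + 1) * A * Es j := by rw [hsumE1]
    _ = cR * (Fi j * Es j) := key
    _ = cR * (∑ l ∈ Finset.range (d + 1), Fi l * Es l) * Es j := by
        rw [mul_assoc, hsumE]
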